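/- Let C ⊆ ℝ^n be nonempty, closed and convex, let g, h : ℝ^n → ℝ be continuously differentiable with g ρ_g-convex on C and h ρ_h-convex on C (ρ_g, ρ_h ≥ 0, ρ_g + ρ_h > 0), set f = g − h, and let ᾱ > 0 and γ ∈ [0, (ρ_g + ρ_h)/(1 + (1+ᾱ)²)). Let sequences (x^k)_{k≥0}, (z^k)_{k≥0} in ℝ^n and (α_k)_{k≥0} in ℝ satisfy, with x^{−1} := x^0 and for every k ≥ 0: (a) z^k ∈ C and z^k minimizes u ↦ g(u) − ⟨∇h(x^k) + γ(x^k − x^{k−1}), u⟩ over C; (b) α_k ∈ [0, ᾱ]; (c) x^{k+1} = z^k + α_k(z^k − x^k); (d) x^{k+1} ∈ C; (e) f(x^{k+1}) ≤ f(z^k). Suppose in addition that inf{f(u) : u ∈ C} > −∞ and that the sequence (x^k) is bounded. Then every cluster point x* of (x^k) lies in C and satisfies ⟨∇h(x*) − ∇g(x*), u − x*⟩ ≤ 0 for all u ∈ C, i.e. x* is a critical point of the problem min{f(u) : u ∈ C}. -/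

import Mathlib

open scoped RealInnerProductSpace
open Filter Topology

section Aux

variable {E : Type*} [NormedAddCommGroup E] [InnerProductSpace ℝ E] [CompleteSpace E]

/-- directional slope limit from a gradient -/
lemma aux_dirSlope {φ : E → ℝ} {p x : E} (hφ : HasGradientAt φ p x) (v : E) :
    Tendsto (fun t : ℝ => (φ (x + t • v) - φ x) / t) (𝓝[>] 0) (𝓝 ⟪p, v⟫) := by
  have h1 : HasLineDerivAt ℝ φ ((InnerProductSpace.toDual ℝ E p) v) x v :=
    hφ.hasFDerivAt.hasLineDerivAt v
  have h2 := h1.tendsto_slope_zero_right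
  simp only [InnerProductSpace.toDual_apply_apply] at h2
  convert h2 using 2 with t
  simp [div_eq_inv_mul, smul_eq_mul]

/-- norm of a combination -/
lemma aux_comboNorm (x u : E) (t : ℝ) :
    ‖x + t • (u - x)‖ ^ 2
      = ‖x‖ ^ 2 + t * (‖u‖ ^ 2 - ‖x‖ ^ 2) - t * (1 - t) * ‖u - x‖ ^ 2 := by
  have h1 : ‖x + t • (u - x)‖ ^ 2
      = ‖x‖ ^ 2 + 2 * t * ⟪x, u - x⟫ + t ^ 2 * ‖u - x‖ ^ 2 := by
    rw [norm_add_sq_real, real_inner_smul_right, norm_smul]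
    simp [mul_pow, sq_abs]; ring
  have h2 : ‖u‖ ^ 2 = ‖x‖ ^ 2 + 2 * ⟪x, u - x⟫ + ‖u - x‖ ^ 2 := by
    have : u = x + (u - x) := by abel
    rw [this, norm_add_sq_real]; simp
  rw [h1, h2]; ring

/-- strong convex combination inequality -/
lemma aux_combo {C : Set E} {φ : E → ℝ} {ρ : ℝ}
    (hconv : ConvexOn ℝ C (fun u => φ u - ρ / 2 * ‖u‖ ^ 2))
    {x u : E} (hx : x ∈ C) (hu : u ∈ C) {t : ℝ} (ht0 : 0 ≤ t) (ht1 : t ≤ 1) :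
    φ (x + t • (u - x)) ≤ φ x + t * (φ u - φ x) - ρ / 2 * (t * (1 - t)) * ‖u - x‖ ^ 2 := by
  have := hconv.2 hx hu (by linarith : (0:ℝ) ≤ 1 - t) ht0 (by ring)
  have hcomb : (1 - t) • x + t • u = x + t • (u - x) := by
    simp [smul_sub, sub_smul]; abel
  rw [hcomb] at this
  simp only [smul_eq_mul] at this
  rw [aux_comboNorm x u t] at this
  ring_nf at this ⊢
  linarith

/-- gradient inequality for a ρ-convex function -/
lemma aux_gradIneq {C : Set E} (hCcv : Convex ℝ C) {φ : E → ℝ} {ρ : ℝ}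
    (hconv : ConvexOn ℝ C (fun u => φ u - ρ / 2 * ‖u‖ ^ 2))
    {p x u : E} (hφ : HasGradientAt φ p x) (hx : x ∈ C) (hu : u ∈ C) :
    φ x + ⟪p, u - x⟫ + ρ / 2 * ‖u - x‖ ^ 2 ≤ φ u := by
  have key : ∀ t : ℝ, t ∈ Set.Ioc (0:ℝ) 1 →
      (φ (x + t • (u - x)) - φ x) / t ≤ φ u - φ x - ρ / 2 * (1 - t) * ‖u - x‖ ^ 2 := by
    intro t ht
    have h := aux_combo hconv hx hu ht.1.le ht.2
    rw [div_le_iff₀ ht.1]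
    nlinarith [h, ht.1]
  have hlim1 := aux_dirSlope hφ (u - x)
  have hlim2 : Tendsto (fun t : ℝ => φ u - φ x - ρ / 2 * (1 - t) * ‖u - x‖ ^ 2) (𝓝[>] (0:ℝ))
      (𝓝 (φ u - φ x - ρ / 2 * ‖u - x‖ ^ 2)) := by
    have : Tendsto (fun t : ℝ => φ u - φ x - ρ / 2 * (1 - t) * ‖u - x‖ ^ 2) (𝓝 (0:ℝ))
        (𝓝 (φ u - φ x - ρ / 2 * (1 - (0:ℝ)) * ‖u - x‖ ^ 2)) := by
      exact Continuous.tendsto (by continuity) 0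
    simpa using this.mono_left nhdsWithin_le_nhds
  have hev : ∀ᶠ t : ℝ in 𝓝[>] 0,
      (φ (x + t • (u - x)) - φ x) / t ≤ φ u - φ x - ρ / 2 * (1 - t) * ‖u - x‖ ^ 2 := by
    filter_upwards [Ioc_mem_nhdsGT one_pos] with t ht using key t ht
  have := le_of_tendsto_of_tendsto hlim1 hlim2 hev
  linarith

/-- linear shift preserves ρ-convexity -/
lemma aux_shift {C : Set E} {φ : E → ℝ} {ρ : ℝ}
    (hconv : ConvexOn ℝ C (fun u => φ u - ρ / 2 * ‖u‖ ^ 2)) (v : E) :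
    ConvexOn ℝ C (fun u => (φ u - ⟪v, u⟫) - ρ / 2 * ‖u‖ ^ 2) := by
  have hlin : ConvexOn ℝ C (fun u => -⟪v, u⟫) := by
    refine ⟨hconv.1, fun a ha b hb s t hs ht hst => ?_⟩
    simp only [inner_add_right, real_inner_smul_right, smul_eq_mul]
    apply le_of_eq; ring
  have h2 := hconv.add hlin
  have heq : (fun u => (φ u - ⟪v, u⟫) - ρ / 2 * ‖u‖ ^ 2)
      = ((fun u => φ u - ρ / 2 * ‖u‖ ^ 2) + fun u => -⟪v, u⟫) := by
    funext u; simp; ring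
  rwa [heq]

/-- a minimizer of a ρ-strongly convex function satisfies the strong inequality -/
lemma aux_minStrong {C : Set E} (hCcv : Convex ℝ C) {φ : E → ℝ} {ρ : ℝ} (hρ : 0 ≤ ρ)
    (hconv : ConvexOn ℝ C (fun u => φ u - ρ / 2 * ‖u‖ ^ 2))
    {z : E} (hz : z ∈ C) (hmin : ∀ u ∈ C, φ z ≤ φ u) {u : E} (hu : u ∈ C) :
    φ z + ρ / 2 * ‖u - z‖ ^ 2 ≤ φ u := by
  have key : ∀ t : ℝ, t ∈ Set.Ioc (0:ℝ) 1 →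
      φ z + ρ / 2 * (1 - t) * ‖u - z‖ ^ 2 ≤ φ u := by
    intro t ht
    have h := aux_combo hconv hz hu ht.1.le ht.2
    have hmem : z + t • (u - z) ∈ C := by
      have := hCcv hz hu (by linarith [ht.2] : (0:ℝ) ≤ 1 - t) ht.1.le (by ring)
      have hcomb : (1 - t) • z + t • u = z + t • (u - z) := by
        simp [smul_sub, sub_smul]; abel
      rwa [hcomb] at this
    have hm := hmin _ hmem
    nlinarith [ht.1, mul_le_mul_of_nonneg_left (show φ z ≤ φ (z + t • (u - z)) from hm) ht.1.le]
  have hlim : Tendsto (fun t : ℝ => φ z + ρ / 2 * (1 - t) * ‖u - z‖ ^ 2) (𝓝[>] (0:ℝ))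
      (𝓝 (φ z + ρ / 2 * ‖u - z‖ ^ 2)) := by
    have : Tendsto (fun t : ℝ => φ z + ρ / 2 * (1 - t) * ‖u - z‖ ^ 2) (𝓝 (0:ℝ))
        (𝓝 (φ z + ρ / 2 * (1 - (0:ℝ)) * ‖u - z‖ ^ 2)) :=
      Continuous.tendsto (by continuity) 0
    simpa using this.mono_left nhdsWithin_le_nhds
  refine le_of_tendsto hlim ?_
  filter_upwards [Ioc_mem_nhdsGT one_pos] with t ht using key t ht

/-- first-order optimality condition at a minimizer over a convex set -/
lemma aux_firstOrder {C : Set E} (hCcv : Convex ℝ C) {φ : E → ℝ} {p z : E}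
    (hφ : HasGradientAt φ p z)
    (hz : z ∈ C) (hmin : ∀ u ∈ C, φ z ≤ φ u) {u : E} (hu : u ∈ C) :
    0 ≤ ⟪p, u - z⟫ := by
  have hlim := aux_dirSlope hφ (u - z)
  refine ge_of_tendsto hlim ?_
  filter_upwards [Ioc_mem_nhdsGT one_pos] with t ht
  have hmem : z + t • (u - z) ∈ C := by
    have := hCcv hz hu (by linarith [ht.2] : (0:ℝ) ≤ 1 - t) ht.1.le (by ring)
    have hcomb : (1 - t) • z + t • u = z + t • (u - z) := by
      simp [smul_sub, sub_smul]; abel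
    rwa [hcomb] at this
  have := hmin _ hmem
  exact div_nonneg (by linarith) ht.1.le

/-- gradient of the inner product with a fixed vector -/
lemma aux_gradInner (w x : E) : HasGradientAt (fun u => ⟪w, u⟫) w x := by
  rw [hasGradientAt_iff_hasFDerivAt]
  have hEq : (InnerProductSpace.toDual ℝ E w : E →L[ℝ] ℝ) = innerSL ℝ w := by
    ext u; simp
  rw [hEq]
  exact (innerSL ℝ w).hasFDerivAt

lemma aux_gradSub {φ : E → ℝ} {p x : E} (hφ : HasGradientAt φ p x) (w : E) :
    HasGradientAt (fun u => φ u - ⟪w, u⟫) (p - w) x := by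
  rw [hasGradientAt_iff_hasFDerivAt, map_sub]
  exact hφ.hasFDerivAt.sub (aux_gradInner w x).hasFDerivAt

end Aux

set_option maxHeartbeats 1600000

/-- Subsequential convergence of HDCA-LI to critical points
(Theorem 2.4, third item). `x (k-1)` uses truncated subtraction on `ℕ`,
so `x (0-1) = x 0`, encoding the convention `x⁻¹ := x⁰`. -/
theorem stmt3 {n : ℕ} (C : Set (EuclideanSpace ℝ (Fin n)))
    (hCne : C.Nonempty) (hCcl : IsClosed C) (hCcv : Convex ℝ C)
    (g h : EuclideanSpace ℝ (Fin n) → ℝ)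
    (g' h' : EuclideanSpace ℝ (Fin n) → EuclideanSpace ℝ (Fin n))
    (hg : ∀ u, HasGradientAt g (g' u) u) (hh : ∀ u, HasGradientAt h (h' u) u)
    (hg' : Continuous g') (hh' : Continuous h')
    (ρg ρh : ℝ) (hρg : 0 ≤ ρg) (hρh : 0 ≤ ρh) (hρ : 0 < ρg + ρh)
    (hgconv : ConvexOn ℝ C (fun u => g u - ρg / 2 * ‖u‖ ^ 2))
    (hhconv : ConvexOn ℝ C (fun u => h u - ρh / 2 * ‖u‖ ^ 2))
    (abar γ : ℝ) (habar : 0 < abar) (hγ0 : 0 ≤ γ)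
    (hγ1 : γ < (ρg + ρh) / (1 + (1 + abar) ^ 2))
    (x z : ℕ → EuclideanSpace ℝ (Fin n)) (α : ℕ → ℝ)
    (hzC : ∀ k, z k ∈ C)
    (hmin : ∀ k, ∀ u ∈ C,
      g (z k) - ⟪h' (x k) + γ • (x k - x (k - 1)), z k⟫ ≤
        g u - ⟪h' (x k) + γ • (x k - x (k - 1)), u⟫)
    (hα : ∀ k, α k ∈ Set.Icc (0 : ℝ) abar)
    (hupd : ∀ k, x (k + 1) = z k + α k • (z k - x k))
    (hxC : ∀ k, x (k + 1) ∈ C)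
    (hdec : ∀ k, g (x (k + 1)) - h (x (k + 1)) ≤ g (z k) - h (z k))
    (hbdd : ∃ m : ℝ, ∀ u ∈ C, m ≤ g u - h u)
    (hxbdd : ∃ M : ℝ, ∀ k, ‖x k‖ ≤ M) :
    ∀ xs : EuclideanSpace ℝ (Fin n), MapClusterPt xs atTop x →
      xs ∈ C ∧ ∀ u ∈ C, ⟪h' xs - g' xs, u - xs⟫ ≤ 0 := by
  obtain ⟨m, hm⟩ := hbdd
  intro xs hxs
  have hβ : (0:ℝ) < 1 + (1 + abar) ^ 2 := by positivity
  set c : ℝ := (ρg + ρh - γ * (1 + (1 + abar) ^ 2)) / 2 with hcdef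
  have hcpos : 0 < c := by
    have := (lt_div_iff₀ hβ).mp hγ1
    rw [hcdef]; nlinarith
  have hxC' : ∀ k, 1 ≤ k → x k ∈ C := by
    intro k hk
    obtain ⟨j, rfl⟩ := Nat.exists_eq_add_of_le hk
    simpa [Nat.add_comm] using hxC j
  have hgc : Continuous g := by
    rw [continuous_iff_continuousAt]
    exact fun u => (hg u).differentiableAt.continuousAt
  -- one-step descent inequality
  have step : ∀ k, 1 ≤ k →
      g (z k) - h (z k) ≤ (g (x k) - h (x k)) + γ / 2 * ‖x k - x (k-1)‖ ^ 2
        - (ρg + ρh - γ) / 2 * ‖z k - x k‖ ^ 2 := by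
    intro k hk
    set v := h' (x k) + γ • (x k - x (k-1)) with hv
    have hφconv := aux_shift hgconv v
    have hD := aux_minStrong (φ := fun u => g u - ⟪v, u⟫) hCcv hρg hφconv (hzC k)
      (hmin k) (hxC' k hk)
    have hH := aux_gradIneq hCcv hhconv (hh (x k)) (hxC' k hk) (hzC k)
    have hns : ‖x k - z k‖ = ‖z k - x k‖ := norm_sub_rev _ _
    rw [hns] at hD
    have h1 : ⟪v, z k⟫ - ⟪v, x k⟫ = ⟪v, z k - x k⟫ := (inner_sub_right _ _ _).symm
    have hinner : ⟪v, z k - x k⟫ - ⟪h' (x k), z k - x k⟫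
        = γ * ⟪x k - x (k-1), z k - x k⟫ := by
      rw [hv, inner_add_left, real_inner_smul_left]; ring
    have hCS : ⟪x k - x (k-1), z k - x k⟫ ≤ ‖x k - x (k-1)‖ * ‖z k - x k‖ :=
      real_inner_le_norm _ _
    have hyoung : ‖x k - x (k-1)‖ * ‖z k - x k‖
        ≤ (‖x k - x (k-1)‖ ^ 2 + ‖z k - x k‖ ^ 2) / 2 := by
      nlinarith [sq_nonneg (‖x k - x (k-1)‖ - ‖z k - x k‖)]
    have h3 : γ * ⟪x k - x (k-1), z k - x k⟫
        ≤ γ * ((‖x k - x (k-1)‖ ^ 2 + ‖z k - x k‖ ^ 2) / 2) :=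
      mul_le_mul_of_nonneg_left (hCS.trans hyoung) hγ0
    linarith [hD, hH, h3, h1, hinner]
  -- Lyapunov function
  set L : ℕ → ℝ := fun k => (g (x (k+1)) - h (x (k+1))) + γ / 2 * ‖x (k+1) - x k‖ ^ 2
    with hLdef
  have hstep2 : ∀ k, L (k+1) + c * ‖z (k+1) - x (k+1)‖ ^ 2 ≤ L k := by
    intro k
    have h1 := step (k+1) (Nat.le_add_left 1 k)
    have h2 := hdec (k+1)
    have h3 : x (k+2) - x (k+1) = (1 + α (k+1)) • (z (k+1) - x (k+1)) := by
      rw [hupd (k+1)]; rw [add_smul, one_smul, smul_sub]; abel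
    have h4 : ‖x (k+2) - x (k+1)‖ ^ 2 = (1 + α (k+1)) ^ 2 * ‖z (k+1) - x (k+1)‖ ^ 2 := by
      rw [h3, norm_smul, mul_pow, Real.norm_eq_abs, sq_abs]
    have h5 : (1 + α (k+1)) ^ 2 ≤ (1 + abar) ^ 2 := by
      have := (hα (k+1)).1; have := (hα (k+1)).2; nlinarith
    have h6 : ‖x (k+2) - x (k+1)‖ ^ 2 ≤ (1 + abar) ^ 2 * ‖z (k+1) - x (k+1)‖ ^ 2 := by
      rw [h4]; exact mul_le_mul_of_nonneg_right h5 (sq_nonneg _)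
    have h7 := mul_le_mul_of_nonneg_left h6 (by linarith : (0:ℝ) ≤ γ / 2)
    have h8 : (k + 1 : ℕ) - 1 = k := rfl
    rw [h8] at h1
    simp only [hLdef, hcdef]
    linarith
  have hLantitone : Antitone L := by
    apply antitone_nat_of_succ_le
    intro k
    have := hstep2 k
    nlinarith [mul_nonneg hcpos.le (sq_nonneg ‖z (k+1) - x (k+1)‖)]
  have hLbdd : ∀ k, m ≤ L k := by
    intro k
    have h1 := hm (x (k+1)) (hxC k)
    have h2 : 0 ≤ γ / 2 * ‖x (k+1) - x k‖ ^ 2 := by positivity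
    simp only [hLdef]; linarith
  have hLconv : Tendsto L atTop (𝓝 (⨅ k, L k)) := by
    apply tendsto_atTop_ciInf hLantitone
    exact ⟨m, fun y ⟨k, hk⟩ => hk ▸ hLbdd k⟩
  have hdiff : Tendsto (fun k => L k - L (k+1)) atTop (𝓝 0) := by
    have := hLconv.sub (hLconv.comp (tendsto_add_atTop_nat 1))
    simpa using this
  have hcd2 : Tendsto (fun k => ‖z (k+1) - x (k+1)‖ ^ 2) atTop (𝓝 0) := by
    have hsq : Tendsto (fun k => c * ‖z (k+1) - x (k+1)‖ ^ 2) atTop (𝓝 0) := by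
      apply squeeze_zero (fun k => by positivity) (fun k => by linarith [hstep2 k]) hdiff
    have := hsq.const_mul c⁻¹
    simpa [mul_comm, ← mul_assoc, inv_mul_cancel₀ hcpos.ne', mul_inv_cancel₀ hcpos.ne'] using this
  have hd : Tendsto (fun k => ‖z (k+1) - x (k+1)‖) atTop (𝓝 0) := by
    have := (Real.continuous_sqrt.tendsto 0).comp hcd2
    simpa [Function.comp_def, Real.sqrt_sq (norm_nonneg _)] using this
  have hzx : Tendsto (fun k => z k - x k) atTop (𝓝 0) := by
    rw [← tendsto_add_atTop_iff_nat 1]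
    rw [tendsto_zero_iff_norm_tendsto_zero]
    exact hd
  have hzxn : Tendsto (fun k => ‖z k - x k‖) atTop (𝓝 0) := by
    rw [← tendsto_zero_iff_norm_tendsto_zero]; exact hzx
  have hxx : Tendsto (fun k => x (k+1) - x k) atTop (𝓝 0) := by
    rw [tendsto_zero_iff_norm_tendsto_zero]
    have hbound : ∀ k, ‖x (k+1) - x k‖ ≤ (1 + abar) * ‖z k - x k‖ := by
      intro k
      have h3 : x (k+1) - x k = (1 + α k) • (z k - x k) := by
        rw [hupd k]; rw [add_smul, one_smul, smul_sub]; abel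
      rw [h3, norm_smul, Real.norm_eq_abs]
      apply mul_le_mul_of_nonneg_right _ (norm_nonneg _)
      rw [abs_of_nonneg (by linarith [(hα k).1] : (0:ℝ) ≤ 1 + α k)]
      linarith [(hα k).2]
    exact squeeze_zero (fun k => norm_nonneg _) hbound
      (by simpa using hzxn.const_mul (1 + abar))
  have hee : Tendsto (fun k => x k - x (k-1)) atTop (𝓝 0) := by
    rw [← tendsto_add_atTop_iff_nat 1]
    exact hxx
  -- extract a convergent subsequence
  obtain ⟨ψ, hψmono, hψtend⟩ := TopologicalSpace.FirstCountableTopology.tendsto_subseq hxs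
  have hψ : Tendsto ψ atTop atTop := hψmono.tendsto_atTop
  have hxsC : xs ∈ C := by
    apply hCcl.mem_of_tendsto hψtend
    filter_upwards [eventually_ge_atTop 1] with k hk
    exact hxC' (ψ k) (le_trans hk (hψmono.le_apply))
  refine ⟨hxsC, fun u hu => ?_⟩
  have hztend : Tendsto (fun k => z (ψ k)) atTop (𝓝 xs) := by
    have h1 := hψtend.add (hzx.comp hψ)
    simpa [Function.comp_def] using h1
  have hvtend : Tendsto (fun k => h' (x (ψ k)) + γ • (x (ψ k) - x (ψ k - 1)))
      atTop (𝓝 (h' xs)) := by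
    have h1 : Tendsto (fun k => h' (x (ψ k))) atTop (𝓝 (h' xs)) :=
      (hh'.tendsto xs).comp hψtend
    have h2 : Tendsto (fun k => γ • (x (ψ k) - x (ψ k - 1))) atTop
        (𝓝 (γ • (0 : EuclideanSpace ℝ (Fin n)))) :=
      (hee.comp hψ).const_smul γ
    simpa using h1.add h2
  have hlimL : Tendsto (fun k => g (z (ψ k))
      - ⟪h' (x (ψ k)) + γ • (x (ψ k) - x (ψ k - 1)), z (ψ k)⟫) atTop
      (𝓝 (g xs - ⟪h' xs, xs⟫)) :=
    ((hgc.tendsto xs).comp hztend).sub (hvtend.inner hztend)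
  have hlimR : Tendsto (fun k => g u
      - ⟪h' (x (ψ k)) + γ • (x (ψ k) - x (ψ k - 1)), u⟫) atTop
      (𝓝 (g u - ⟪h' xs, u⟫)) :=
    tendsto_const_nhds.sub (hvtend.inner tendsto_const_nhds)
  have hkey : g xs - ⟪h' xs, xs⟫ ≤ g u - ⟪h' xs, u⟫ :=
    le_of_tendsto_of_tendsto' hlimL hlimR (fun k => hmin (ψ k) u hu)
  -- but we need minimality over ALL of C, which we have for every u ∈ C
  have hminxs : ∀ w ∈ C, (g xs - ⟪h' xs, xs⟫) ≤ g w - ⟪h' xs, w⟫ := by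
    intro w hw
    have hlimR' : Tendsto (fun k => g w
        - ⟪h' (x (ψ k)) + γ • (x (ψ k) - x (ψ k - 1)), w⟫) atTop
        (𝓝 (g w - ⟪h' xs, w⟫)) :=
      tendsto_const_nhds.sub (hvtend.inner tendsto_const_nhds)
    exact le_of_tendsto_of_tendsto' hlimL hlimR' (fun k => hmin (ψ k) w hw)
  have hgrad : HasGradientAt (fun w => g w - ⟪h' xs, w⟫) (g' xs - h' xs) xs :=
    aux_gradSub (hg xs) (h' xs)
  have hfo := aux_firstOrder hCcv hgrad hxsC hminxs hu
  have : ⟪h' xs - g' xs, u - xs⟫ = -⟪g' xs - h' xs, u - xs⟫ := by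
    rw [show h' xs - g' xs = -(g' xs - h' xs) by abel, inner_neg_left]
  linarith [hfo, this.le, this.ge]
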